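/- Let the immediate consequence operator be t^S_Σ(M) = M ∪ ⋃{f(B) : A ⇒ B ∈ Σ, ⟨f, g⟩ ∈ S, f(A) ⊆ M}. Then t^S_Σ is monotone and extensive, and if L and Y are finite, the iterate N obtained by applying t^S_Σ to M at most |L|·|Y| times is a fixed point of t^S_Σ and equals [M]^S_Σ, the least S-model of Σ containing M. -/
import Mathlib


/-- A complete residuated lattice: a complete lattice with a commutative, associative
multiplication whose neutral element is the top element and which distributes over
arbitrary suprema. -/
class CompleteResiduatedLattice (L : Type*) extends CompleteLattice L, CommMonoid L where
  mul_sSup : ∀ (a : L) (s : Set L), a * sSup s = ⨆ b ∈ s, a * b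
  one_eq_top : (1 : L) = ⊤

namespace FAIparam

variable {L : Type*} {Y : Type*} {X : Type*}

/-- A fuzzy attribute implication (FAI): a pair (antecedent, consequent) of L-sets in Y. -/
abbrev FAI (L Y : Type*) := (Y → L) × (Y → L)

/-- A pair of operators on L-sets in Y. -/
abbrev OpPair (L Y : Type*) := ((Y → L) → (Y → L)) × ((Y → L) → (Y → L))

/-- S is a parameterization: every pair in S is a monotone Galois connection, the identity
pair belongs to S, and S is closed under composition ⟨f₁,g₁⟩∘⟨f₂,g₂⟩ = ⟨f₁∘f₂, g₂∘g₁⟩. -/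
def IsParam [CompleteResiduatedLattice L] (S : Set (OpPair L Y)) : Prop :=
  (∀ p ∈ S, ∀ A B : Y → L, p.1 A ≤ B ↔ A ≤ p.2 B) ∧
  (((id, id) : OpPair L Y) ∈ S) ∧
  (∀ p ∈ S, ∀ q ∈ S, ((p.1 ∘ q.1, q.2 ∘ p.2) : OpPair L Y) ∈ S)

/-- M ⊨^S A ⇒ B : for every ⟨f,g⟩ ∈ S, f(A) ⊆ M implies f(B) ⊆ M. -/
def Sat [CompleteResiduatedLattice L] (S : Set (OpPair L Y)) (M : Y → L) (φ : FAI L Y) : Prop :=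
  ∀ p ∈ S, p.1 φ.1 ≤ M → p.1 φ.2 ≤ M

/-- The set Mod^S(Th) of S-models of a theory Th. -/
def ModS [CompleteResiduatedLattice L] (S : Set (OpPair L Y)) (Th : Set (FAI L Y)) :
    Set (Y → L) :=
  {M | ∀ φ ∈ Th, Sat S M φ}

/-- Semantic entailment Th ⊨^S φ, i.e. Mod^S(Th) ⊆ Mod^S({φ}). -/
def Entails [CompleteResiduatedLattice L] (S : Set (OpPair L Y)) (Th : Set (FAI L Y))
    (φ : FAI L Y) : Prop :=
  ModS S Th ⊆ ModS S {φ}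

/-- [A]^S_Th : the least S-model of Th containing A (intersection of all such models). -/
def clS [CompleteResiduatedLattice L] (S : Set (OpPair L Y)) (Th : Set (FAI L Y))
    (A : Y → L) : Y → L :=
  sInf {M | M ∈ ModS S Th ∧ A ≤ M}

/-- S-closure operator on L^Y. -/
def IsSClosureOp [CompleteResiduatedLattice L] (S : Set (OpPair L Y))
    (c : (Y → L) → (Y → L)) : Prop :=
  (∀ A, A ≤ c A) ∧ (∀ A B, A ≤ B → c A ≤ c B) ∧
  (∀ p ∈ S, ∀ A, c (p.2 (c A)) ≤ p.2 (c A))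

/-- S-closure system in ⟨L^Y, ⊆⟩. -/
def IsSClosureSys [CompleteResiduatedLattice L] (S : Set (OpPair L Y))
    (𝒮 : Set (Y → L)) : Prop :=
  (∀ T ⊆ 𝒮, sInf T ∈ 𝒮) ∧ (∀ p ∈ S, ∀ M ∈ 𝒮, p.2 M ∈ 𝒮)

/-- c_𝒮(A) = ⋂{B ∈ 𝒮 : A ⊆ B}. -/
def clSys [CompleteResiduatedLattice L] (𝒮 : Set (Y → L)) (A : Y → L) : Y → L :=
  sInf {B | B ∈ 𝒮 ∧ A ≤ B}

/-- I ⊨^S A ⇒ B for an L-context ⟨X,Y,I⟩ (with I curried, I x = I_x). -/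
def CtxSat [CompleteResiduatedLattice L] (S : Set (OpPair L Y)) (I : X → Y → L)
    (φ : FAI L Y) : Prop :=
  ∀ x, Sat S (I x) φ

/-- S_g : the set of upper adjoints occurring in S. -/
def Sg [CompleteResiduatedLattice L] (S : Set (OpPair L Y)) : Set ((Y → L) → (Y → L)) :=
  {g | ∃ f, (f, g) ∈ S}

/-- F^↑ = ⋂{g(I_x) : ⟨x,g⟩ ∈ F}. -/
def upOp [CompleteResiduatedLattice L] (I : X → Y → L)
    (F : Set (X × ((Y → L) → (Y → L)))) : Y → L :=
  ⨅ xg ∈ F, xg.2 (I xg.1)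

/-- G^↓ = {⟨x,g⟩ ∈ X × S_g : G ⊆ g(I_x)}. -/
def downOp [CompleteResiduatedLattice L] (S : Set (OpPair L Y)) (I : X → Y → L)
    (G : Y → L) : Set (X × ((Y → L) → (Y → L))) :=
  {xg | xg.2 ∈ Sg S ∧ G ≤ xg.2 (I xg.1)}

/-- G^{↓↑} = ⋂{g(I_x) : x ∈ X, ⟨f,g⟩ ∈ S, G ⊆ g(I_x)}. -/
def dnup [CompleteResiduatedLattice L] (S : Set (OpPair L Y)) (I : X → Y → L)
    (G : Y → L) : Y → L :=
  upOp I (downOp S I G)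

/-- Σ is S-complete in ⟨X,Y,I⟩. -/
def SComplete [CompleteResiduatedLattice L] (S : Set (OpPair L Y)) (Th : Set (FAI L Y))
    (I : X → Y → L) : Prop :=
  ∀ A B : Y → L, Entails S Th (A, B) ↔ CtxSat S I (A, B)

/-- Σ is an S-base of ⟨X,Y,I⟩. -/
def SBase [CompleteResiduatedLattice L] (S : Set (OpPair L Y)) (Th : Set (FAI L Y))
    (I : X → Y → L) : Prop :=
  SComplete S Th I ∧ ∀ Th' ⊂ Th, ¬ SComplete S Th' I

/-- S-provability: axioms A∪B ⇒ A, assumptions from Th, rule (Cut) and rule (F). -/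
inductive ProvS [CompleteResiduatedLattice L] (S : Set (OpPair L Y)) (Th : Set (FAI L Y)) :
    FAI L Y → Prop
  | ax (A B : Y → L) : ProvS S Th (A ⊔ B, A)
  | hyp {φ : FAI L Y} (h : φ ∈ Th) : ProvS S Th φ
  | cut {A B C D : Y → L} : ProvS S Th (A, B) → ProvS S Th (B ⊔ C, D) → ProvS S Th (A ⊔ C, D)
  | mul {A B : Y → L} {p : OpPair L Y} (hp : p ∈ S) : ProvS S Th (A, B) → ProvS S Th (p.1 A, p.1 B)

/-- Provability using the axioms and (Cut) as the only inference rule. -/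
inductive ProvCut [CompleteResiduatedLattice L] (Th : Set (FAI L Y)) : FAI L Y → Prop
  | ax (A B : Y → L) : ProvCut Th (A ⊔ B, A)
  | hyp {φ : FAI L Y} (h : φ ∈ Th) : ProvCut Th φ
  | cut {A B C D : Y → L} : ProvCut Th (A, B) → ProvCut Th (B ⊔ C, D) → ProvCut Th (A ⊔ C, D)

/-- Residuum a → b = ⋁{c : a ⊗ c ≤ b}. -/
def resid [CompleteResiduatedLattice L] (a b : L) : L := sSup {c | a * c ≤ b}

/-- Subsethood degree S(A,B) = ⋀_{y∈Y} (A(y) → B(y)). -/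
def subDeg [CompleteResiduatedLattice L] (A B : Y → L) : L := ⨅ y, resid (A y) (B y)

/-- c ⊗ B, pointwise. -/
def scMul [CompleteResiduatedLattice L] (c : L) (B : Y → L) : Y → L := fun y => c * B y

/-- ||A ⇒ B||^S_M = ⋁{c ∈ L : M ⊨^S A ⇒ c ⊗ B}. -/
def truthDeg [CompleteResiduatedLattice L] (S : Set (OpPair L Y)) (M A B : Y → L) : L :=
  sSup {c | Sat S M (A, scMul c B)}

/-- ||A ⇒ B||^S_Th = ⋀_{M ∈ Mod^S(Th)} ||A ⇒ B||^S_M. -/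
def entDeg [CompleteResiduatedLattice L] (S : Set (OpPair L Y)) (Th : Set (FAI L Y))
    (A B : Y → L) : L :=
  ⨅ M ∈ ModS S Th, truthDeg S M A B

/-- Immediate consequence operator t^S_Th. -/
def tOp [CompleteResiduatedLattice L] (S : Set (OpPair L Y)) (Th : Set (FAI L Y))
    (M : Y → L) : Y → L :=
  M ⊔ sSup {N | ∃ φ ∈ Th, ∃ p ∈ S, p.1 φ.1 ≤ M ∧ N = p.1 φ.2}

/-- S-pseudo-intents, defined by well-founded recursion on ⊊ (L^Y is finite). -/
noncomputable def IsPseudoIntent [CompleteResiduatedLattice L] [Finite L] [Finite Y]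
    (dn : (Y → L) → (Y → L)) : (Y → L) → Prop :=
  (wellFounded_lt (α := Y → L)).fix
    (fun P rec => P < dn P ∧ ∀ Q, ∀ h : Q < P, rec Q h → dn Q ≤ P)


/-- the immediate consequence operator is monotone and extensive, and
(for finite L and Y) its |L|·|Y|-fold iterate at M is a fixed point equal to the
least S-model of Σ containing M. -/
theorem tOp_monotone_extensive_iterate
    {L Y : Type*} [CompleteResiduatedLattice L] [Nonempty Y]
    (S : Set (OpPair L Y)) (hS : IsParam S)
    (Th : Set (FAI L Y)) :
    Monotone (tOp S Th) ∧
    (∀ M : Y → L, M ≤ tOp S Th M) ∧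
    (∀ (_hL : Finite L) (_hY : Finite Y), ∀ M : Y → L,
      tOp S Th ((tOp S Th)^[Nat.card L * Nat.card Y] M) =
        (tOp S Th)^[Nat.card L * Nat.card Y] M ∧
      (tOp S Th)^[Nat.card L * Nat.card Y] M = clS S Th M) := by
  classical
  have hmono : Monotone (tOp S Th) := by
    intro M M' h
    refine sup_le_sup h (sSup_le_sSup ?_)
    rintro N ⟨φ, hφ, p, hp, hle, rfl⟩
    exact ⟨φ, hφ, p, hp, hle.trans h, rfl⟩
  have hext : ∀ N : Y → L, N ≤ tOp S Th N := fun N => le_sup_left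
  refine ⟨hmono, hext, ?_⟩
  intro _hL _hY M
  haveI := Fintype.ofFinite L
  haveI := Fintype.ofFinite Y
  haveI : Nonempty L := ⟨1⟩
  set t := tOp S Th with ht
  set k := Nat.card L * Nat.card Y with hk
  have hchain : ∀ i, t^[i] M ≤ t^[i+1] M := by
    intro i; rw [Function.iterate_succ_apply']; exact hext _
  -- rank function
  set ρ : (Y → L) → ℕ := fun N => ∑ y, ({a | a < N y}).ncard with hρ
  have hρ_lt : ∀ N N' : Y → L, N < N' → ρ N < ρ N' := by
    intro N N' hlt
    obtain ⟨hle, y0, hy0⟩ := Pi.lt_def.mp hlt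
    refine Finset.sum_lt_sum (fun y _ =>
      Set.ncard_le_ncard (fun a ha => lt_of_lt_of_le ha (hle y)) (Set.toFinite _))
      ⟨y0, Finset.mem_univ _, Set.ncard_lt_ncard
        ⟨fun a ha => ha.trans hy0, fun h => absurd (h hy0) (lt_irrefl _)⟩ (Set.toFinite _)⟩
  have hLpos : 0 < Nat.card L := Nat.card_pos
  have hYpos : 0 < Nat.card Y := Nat.card_pos
  have hρ_bound : ∀ N : Y → L, ρ N < k := by
    intro N
    have hterm : ∀ y, ({a | a < N y} : Set L).ncard ≤ Nat.card L - 1 := by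
      intro y
      have h1 : ({a | a < N y} : Set L).ncard < Nat.card L := by
        have := Set.ncard_lt_ncard (s := {a | a < N y}) (t := Set.univ)
          ⟨Set.subset_univ _, fun h => absurd (h (Set.mem_univ (N y))) (lt_irrefl _)⟩
          Set.finite_univ
        simpa [Set.ncard_univ] using this
      omega
    have h2 : ρ N ≤ Nat.card Y * (Nat.card L - 1) := by
      calc ρ N ≤ ∑ _y : Y, (Nat.card L - 1) :=
            Finset.sum_le_sum (fun y _ => hterm y)
        _ = Nat.card Y * (Nat.card L - 1) := by
            simp [Finset.sum_const, Nat.card_eq_fintype_card, Finset.card_univ, mul_comm]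
    have h3 : Nat.card Y * (Nat.card L - 1) < Nat.card Y * Nat.card L :=
      (Nat.mul_lt_mul_left hYpos).mpr (Nat.sub_lt hLpos one_pos)
    calc ρ N ≤ Nat.card Y * (Nat.card L - 1) := h2
      _ < Nat.card Y * Nat.card L := h3
      _ = k := by rw [hk, mul_comm]
  -- find a stabilizing index
  have hstab : ∃ i < k, t^[i+1] M = t^[i] M := by
    by_contra hcon
    push_neg at hcon
    have hstrict : ∀ i < k, t^[i] M < t^[i+1] M := fun i hi =>
      lt_of_le_of_ne (hchain i) (fun h => hcon i hi h.symm)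
    have hgrow : ∀ i ≤ k, i ≤ ρ (t^[i] M) := by
      intro i
      induction i with
      | zero => intro _; exact Nat.zero_le _
      | succ n ih =>
        intro hn
        have h1 := ih (Nat.le_of_succ_le hn)
        have h2 := hρ_lt _ _ (hstrict n (Nat.lt_of_succ_le hn))
        omega
    have := hgrow k le_rfl
    have := hρ_bound (t^[k] M)
    omega
  obtain ⟨i, hik, hfix⟩ := hstab
  have hconst : ∀ j, t^[i + j] M = t^[i] M := by
    intro j
    induction j with
    | zero => rfl
    | succ n ih =>
      have : i + (n + 1) = (i + n) + 1 := by omega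
      rw [this, Function.iterate_succ_apply', ih, ← Function.iterate_succ_apply' t i M]
      exact hfix
  have hkN : t^[k] M = t^[i] M := by
    have : k = i + (k - i) := by omega
    rw [this, hconst]
  have hNfix : t (t^[k] M) = t^[k] M := by
    rw [hkN, ← Function.iterate_succ_apply' t i M]
    exact hfix
  refine ⟨hNfix, ?_⟩
  set N := t^[k] M with hN
  -- N is a model
  have hNmod : N ∈ ModS S Th := by
    intro φ hφ p hp hle
    have h1 : p.1 φ.2 ≤ sSup {N' | ∃ φ ∈ Th, ∃ p ∈ S, p.1 φ.1 ≤ N ∧ N' = p.1 φ.2} :=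
      le_sSup ⟨φ, hφ, p, hp, hle, rfl⟩
    calc p.1 φ.2 ≤ _ := h1
      _ ≤ t N := le_sup_right
      _ = N := hNfix
  -- M ≤ N
  have hMN : M ≤ N := by
    have : ∀ j, M ≤ t^[j] M := by
      intro j
      induction j with
      | zero => exact le_rfl
      | succ n ih => exact ih.trans (hchain n)
    exact this k
  -- N ≤ any model containing M
  have hNle : ∀ P : Y → L, P ∈ ModS S Th → M ≤ P → N ≤ P := by
    intro P hPmod hMP
    have hstep : ∀ Q : Y → L, Q ≤ P → t Q ≤ P := by
      intro Q hQP
      refine sup_le hQP (sSup_le ?_)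
      rintro _ ⟨φ, hφ, p, hp, hle, rfl⟩
      exact hPmod φ hφ p hp (hle.trans hQP)
    have : ∀ j, t^[j] M ≤ P := by
      intro j
      induction j with
      | zero => exact hMP
      | succ n ih => rw [Function.iterate_succ_apply']; exact hstep _ ih
    exact this k
  refine le_antisymm ?_ ?_
  · exact le_sInf (fun P hP => hNle P hP.1 hP.2)
  · exact sInf_le ⟨hNmod, hMN⟩

end FAIparam
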